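/- arXiv:1301.5147 — 9 statements merged into one kernel-verified Lean document; each statement's English description precedes it below -/
import Mathlib

section
/- For all integers α, β, the trace of the matrix M(α,β)⁻¹ · F equals 25α² + 25β² − 55αβ − 23. Consequently, trace(M(α,β)⁻¹ · F) = 2 if and only if 25α² + 25β² − 55αβ = 25. -/
open Matrix

/-- The Dehn twist matrix of a simple closed curve of class `α·a + β·b` on the torus. -/
def DehnTwistMatrix (α β : ℤ) : Matrix (Fin 2) (Fin 2) ℤ :=
  !![1 - α * β, α ^ 2; -β ^ 2, 1 + α * β]

/-- The monodromy matrix `F` of the genus-1 Lefschetz fibration. -/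
def Fmat : Matrix (Fin 2) (Fin 2) ℤ := !![-39, 25; -25, 16]

theorem stmt_3 (α β : ℤ) :
    ((DehnTwistMatrix α β)⁻¹ * Fmat).trace =
      25 * α ^ 2 + 25 * β ^ 2 - 55 * α * β - 23 ∧
    (((DehnTwistMatrix α β)⁻¹ * Fmat).trace = 2 ↔
      25 * α ^ 2 + 25 * β ^ 2 - 55 * α * β = 25) := by
  have h : ((DehnTwistMatrix α β)⁻¹ * Fmat).trace =
      25 * α ^ 2 + 25 * β ^ 2 - 55 * α * β - 23 := by
    have hdet : (DehnTwistMatrix α β).det = 1 := by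
      simp [DehnTwistMatrix, Matrix.det_fin_two]; ring
    simp [Matrix.inv_def, hdet, Matrix.adjugate_fin_two, Matrix.det_fin_two,
      DehnTwistMatrix, Fmat, Matrix.trace_fin_two, Matrix.mul_apply,
      Fin.sum_univ_two, Ring.inverse_one]
    ring_nf
    simp only [Ring.inverse_one]
    ring
  exact ⟨h, by rw [h]; omega⟩
end

section
/- The set of integer solutions (α, β) of the quadratic Diophantine equation 25α² + 25β² − 55αβ = 25 is exactly the set of column vectors of the form S^k · w, where k ranges over ℤ, S = [[−3, 5], [−5, 8]] (an invertible integer matrix of determinant 1, so that S^k is defined for all integers k), and w ranges over the four vectors (1,0), (−1,0), (0,1), (0,−1). -/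
open Matrix

/-- The matrix `S = [[-3, 5], [-5, 8]]`; it has determinant 1, hence its integer
powers `S ^ k` (using the `zpow` of matrices over a commutative ring, which agrees
with the usual inverse since `S` is invertible) are integer matrices. -/
def Smat : Matrix (Fin 2) (Fin 2) ℤ := !![-3, 5; -5, 8]



lemma Smat_det : IsUnit Smat.det := by
  simp [Smat, Matrix.det_fin_two_of]

lemma Smat_inv : Smat⁻¹ = !![8, -5; 5, -3] := by
  apply inv_eq_right_inv
  ext i j
  fin_cases i <;> fin_cases j <;> simp [Smat, Matrix.mul_apply, Fin.sum_univ_succ]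

lemma Smat_mulVec (a b : ℤ) : Smat *ᵥ ![a, b] = ![-3*a+5*b, -5*a+8*b] := by
  funext i
  fin_cases i <;> simp [Smat, Matrix.mulVec, dotProduct, Fin.sum_univ_succ]

lemma SmatInv_mulVec (a b : ℤ) : Smat⁻¹ *ᵥ ![a, b] = ![8*a-5*b, 5*a-3*b] := by
  rw [Smat_inv]
  funext i
  fin_cases i <;> simp [Matrix.mulVec, dotProduct, Fin.sum_univ_succ] <;> ring

lemma Smat_cancel {x y : Fin 2 → ℤ} (h : Smat *ᵥ x = Smat *ᵥ y) : x = y := by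
  have h0 := congrFun h 0
  have h1 := congrFun h 1
  simp [Smat, Matrix.mulVec, dotProduct, Fin.sum_univ_succ] at h0 h1
  funext i
  fin_cases i <;> simp <;> linarith

/-- invariance of the quadratic form under S^k -/
lemma Qinv : ∀ (k : ℤ) (a b : ℤ), 5*a^2 + 5*b^2 - 11*a*b = 5 →
    5*((Smat ^ k *ᵥ ![a,b]) 0)^2 + 5*((Smat ^ k *ᵥ ![a,b]) 1)^2
      - 11*((Smat ^ k *ᵥ ![a,b]) 0)*((Smat ^ k *ᵥ ![a,b]) 1) = 5 := by
  intro k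
  induction k using Int.induction_on with
  | zero => intro a b h; simpa using h
  | succ n ih =>
      intro a b h
      have hrw : Smat ^ ((n:ℤ) + 1) *ᵥ ![a,b] = Smat ^ (n:ℤ) *ᵥ ![-3*a+5*b, -5*a+8*b] := by
        rw [Matrix.zpow_add_one Smat_det, ← Matrix.mulVec_mulVec, Smat_mulVec]
      rw [hrw]
      exact ih _ _ (by linear_combination h)
  | pred n ih =>
      intro a b h
      have hrw : Smat ^ (-(n:ℤ) - 1) *ᵥ ![a,b] = Smat ^ (-(n:ℤ)) *ᵥ ![8*a-5*b, 5*a-3*b] := by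
        rw [Matrix.zpow_sub_one Smat_det, ← Matrix.mulVec_mulVec, SmatInv_mulVec]
      rw [hrw]
      exact ih _ _ (by linear_combination h)

lemma bound1 {a b : ℤ} (ha : 0 < a) (hab : a < b) (he : 5*a^2 + 5*b^2 - 11*a*b = 5) :
    b < 2*a := by
  by_contra hcon
  push_neg at hcon
  have h9 : 0 ≤ a*(b-2*a) := mul_nonneg ha.le (by linarith)
  have hle : 9*(a*(b-2*a)) ≤ 2 := by nlinarith [sq_nonneg (b-2*a), sq_nonneg (a-1)]
  have hz : a*(b-2*a) = 0 := le_antisymm (by linarith) h9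
  have hb2 : b = 2*a := by
    rcases mul_eq_zero.1 hz with h | h
    · exfalso; exact ha.ne' h
    · linarith
  have h35 : 3*a^2 = 5 := by rw [hb2] at he; linear_combination he
  have ha2 : a ≤ 1 := by
    by_contra hc
    push_neg at hc
    have : 0 ≤ a*(a-2) := mul_nonneg ha.le (by linarith)
    nlinarith
  have ha1 : a = 1 := le_antisymm ha2 ha
  rw [ha1] at h35
  norm_num at h35

lemma bound2 {a b : ℤ} (ha : 0 < a) (hab : a < b) (he : 5*a^2 + 5*b^2 - 11*a*b = 5) :
    4*a < 3*b := by
  by_contra hcon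
  push_neg at hcon
  nlinarith [mul_nonneg (by linarith : (0:ℤ) ≤ 4*a - 3*b) (by linarith : (0:ℤ) ≤ b - a),
    mul_nonneg (by linarith : (0:ℤ) ≤ 4*a - 3*b) ha.le,
    mul_pos (by linarith : (0:ℤ) < b - a) (by linarith : (0:ℤ) < b - a)]

/-- main descent lemma -/
lemma key : ∀ n : ℕ, ∀ α β : ℤ, (α^2 + β^2).toNat = n →
    5*α^2 + 5*β^2 - 11*α*β = 5 →
    ∃ k : ℤ, ∃ w ∈ ({(1, 0), (-1, 0), (0, 1), (0, -1)} : Set (ℤ × ℤ)),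
      ![α, β] = (Smat ^ k) *ᵥ ![w.1, w.2] := by
  intro n
  induction n using Nat.strong_induction_on with
  | _ n ih =>
  intro α β hn heq
  have core : ∀ a b : ℤ, 0 < a → 0 < b → (a^2 + b^2).toNat = n →
      5*a^2 + 5*b^2 - 11*a*b = 5 →
      ∃ k : ℤ, ∃ w ∈ ({(1, 0), (-1, 0), (0, 1), (0, -1)} : Set (ℤ × ℤ)),
        ![a, b] = (Smat ^ k) *ᵥ ![w.1, w.2] := by
    intro a b ha hb hm he
    have hne : a ≠ b := by
      rintro rfl; nlinarith
    rcases lt_or_gt_of_ne hne with hlt | hgt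
    · -- a < b : (a', b') = (8a-5b, 5a-3b), and (a,b) = S(a',b')
      have h1 : b < 2*a := bound1 ha hlt he
      have h2 : 4*a < 3*b := bound2 ha hlt he
      have hmeas : (8*a-5*b)^2 + (5*a-3*b)^2 < a^2 + b^2 := by
        nlinarith [mul_pos (by linarith : (0:ℤ) < 2*a - b) (by linarith : (0:ℤ) < 3*b - 4*a)]
      have hpos : (0:ℤ) < a^2 + b^2 := by positivity
      have hlt' : ((8*a-5*b)^2 + (5*a-3*b)^2).toNat < n := by
        rw [← hm]
        exact (Int.toNat_lt_toNat hpos).2 hmeas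
      obtain ⟨k, w, hw, hrep⟩ := ih _ hlt' (8*a-5*b) (5*a-3*b) rfl (by linear_combination he)
      refine ⟨1 + k, w, hw, ?_⟩
      rw [Matrix.zpow_one_add Smat_det, ← Matrix.mulVec_mulVec, ← hrep, Smat_mulVec]
      funext i; fin_cases i <;> simp <;> ring
    · -- a > b : (a', b') = (-3a+5b, -5a+8b) = S(a,b)
      have h1 : a < 2*b := bound1 hb hgt (by linear_combination he)
      have h2 : 4*b < 3*a := bound2 hb hgt (by linear_combination he)
      have hmeas : (-3*a+5*b)^2 + (-5*a+8*b)^2 < a^2 + b^2 := by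
        nlinarith [mul_pos (by linarith : (0:ℤ) < 2*b - a) (by linarith : (0:ℤ) < 3*a - 4*b)]
      have hpos : (0:ℤ) < a^2 + b^2 := by positivity
      have hlt' : ((-3*a+5*b)^2 + (-5*a+8*b)^2).toNat < n := by
        rw [← hm]
        exact (Int.toNat_lt_toNat hpos).2 hmeas
      obtain ⟨k, w, hw, hrep⟩ := ih _ hlt' (-3*a+5*b) (-5*a+8*b) rfl (by linear_combination he)
      refine ⟨-1 + k, w, hw, ?_⟩
      apply Smat_cancel
      rw [Matrix.mulVec_mulVec, ← Matrix.zpow_one_add Smat_det]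
      have hk : (1 : ℤ) + (-1 + k) = k := by ring
      rw [hk, Smat_mulVec, hrep]
  rcases eq_or_ne α 0 with rfl | hα
  · have hb2 : β^2 = 1 := by linarith
    have h2 : (β - 1) * (β + 1) = 0 := by linear_combination hb2
    have hβ : β = 1 ∨ β = -1 := by
      rcases mul_eq_zero.1 h2 with h | h
      · left; linarith
      · right; linarith
    rcases hβ with rfl | rfl
    · refine ⟨0, (0, 1), by simp, ?_⟩
      rw [zpow_zero, Matrix.one_mulVec]
    · refine ⟨0, (0, -1), by simp, ?_⟩
      rw [zpow_zero, Matrix.one_mulVec]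
  rcases eq_or_ne β 0 with rfl | hβ
  · have ha2 : α^2 = 1 := by linarith
    have h2 : (α - 1) * (α + 1) = 0 := by linear_combination ha2
    have hα' : α = 1 ∨ α = -1 := by
      rcases mul_eq_zero.1 h2 with h | h
      · left; linarith
      · right; linarith
    rcases hα' with rfl | rfl
    · refine ⟨0, (1, 0), by simp, ?_⟩
      rw [zpow_zero, Matrix.one_mulVec]
    · refine ⟨0, (-1, 0), by simp, ?_⟩
      rw [zpow_zero, Matrix.one_mulVec]
  have h0 : 0 ≤ α * β := by nlinarith [sq_nonneg (α + β)]
  have hsign : 0 < α * β := lt_of_le_of_ne h0 (Ne.symm (mul_ne_zero hα hβ))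
  rcases hα.lt_or_gt with hneg | hpos
  · -- α < 0, so β < 0
    have hbneg : β < 0 := by
      by_contra hc
      push_neg at hc
      nlinarith
    obtain ⟨k, w, hw, hrep⟩ := core (-α) (-β) (by linarith) (by linarith)
      (by rw [← hn]; ring_nf) (by linear_combination heq)
    refine ⟨k, (-w.1, -w.2), ?_, ?_⟩
    · simp only [Set.mem_insert_iff, Set.mem_singleton_iff] at hw ⊢
      rcases hw with rfl | rfl | rfl | rfl <;> norm_num
    · have hnegvec : (![-w.1, -w.2] : Fin 2 → ℤ) = -![w.1, w.2] := by
        funext i; fin_cases i <;> simp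
      rw [hnegvec, Matrix.mulVec_neg, ← hrep]
      funext i; fin_cases i <;> simp
  · have hbpos : 0 < β := by
      by_contra hc
      push_neg at hc
      nlinarith
    exact core α β hpos hbpos hn heq

theorem stmt_4 :
    {p : ℤ × ℤ | 25 * p.1 ^ 2 + 25 * p.2 ^ 2 - 55 * p.1 * p.2 = 25} =
      {p : ℤ × ℤ | ∃ k : ℤ,
        ∃ w ∈ ({(1, 0), (-1, 0), (0, 1), (0, -1)} : Set (ℤ × ℤ)),
          ![p.1, p.2] = (Smat ^ k) *ᵥ ![w.1, w.2]} := by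
  ext p
  simp only [Set.mem_setOf_eq]
  constructor
  · intro hp
    exact key _ p.1 p.2 rfl (by linarith)
  · rintro ⟨k, w, hw, hrep⟩
    have h1 : p.1 = (Smat ^ k *ᵥ ![w.1, w.2]) 0 := by
      have := congrFun hrep 0; simpa using this
    have h2 : p.2 = (Smat ^ k *ᵥ ![w.1, w.2]) 1 := by
      have := congrFun hrep 1; simpa using this
    have hw5 : 5*w.1^2 + 5*w.2^2 - 11*w.1*w.2 = 5 := by
      simp only [Set.mem_insert_iff, Set.mem_singleton_iff] at hw
      rcases hw with rfl | rfl | rfl | rfl <;> norm_num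
    have := Qinv k w.1 w.2 hw5
    rw [h1, h2]
    linarith
end

section
/- For every integer k, let u_k and v_k denote the images of the column vectors (3,5) and (1,0) under S^k. Then M(v_k) · M(u_k) = F. In particular (k = 0), M(1,0) · M(3,5) = F, i.e. [[1,1],[0,1]] · [[−14,9],[−25,16]] = [[−39,25],[−25,16]]. -/
open Matrix

/-- The Dehn twist matrix of a vector `w = (α, β) ∈ ℤ²`. -/
def DehnTwistMatrixVec (w : Fin 2 → ℤ) : Matrix (Fin 2) (Fin 2) ℤ :=
  DehnTwistMatrix (w 0) (w 1)

lemma dtm_conj (A : Matrix (Fin 2) (Fin 2) ℤ) (hA : A.det = 1) (w : Fin 2 → ℤ) :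
    DehnTwistMatrixVec (A *ᵥ w) * A = A * DehnTwistMatrixVec w := by
  rw [Matrix.det_fin_two] at hA
  ext i j
  fin_cases i <;> fin_cases j <;>
    simp only [DehnTwistMatrixVec, DehnTwistMatrix, Matrix.mul_apply, Matrix.mulVec,
      Fin.sum_univ_two, dotProduct, Matrix.cons_val_zero, Matrix.cons_val_one,
      Matrix.head_cons, Matrix.of_apply, Matrix.cons_val', Matrix.empty_val',
      Matrix.cons_val_fin_one, Matrix.head_fin_const, Fin.mk_zero, Fin.mk_one]
  · linear_combination (-(A 0 1 * w 1 ^ 2) - A 0 0 * w 0 * w 1) * hA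
  · linear_combination (A 0 1 * w 0 * w 1 + A 0 0 * w 0 ^ 2) * hA
  · linear_combination (-(A 1 1 * w 1 ^ 2) - A 1 0 * w 0 * w 1) * hA
  · linear_combination (A 1 1 * w 0 * w 1 + A 1 0 * w 0 ^ 2) * hA

lemma smat_det : Smat.det = 1 := by
  simp [Smat, Matrix.det_fin_two_of]

lemma smat_zpow_det (k : ℤ) : (Smat ^ k).det = 1 := by
  cases k with
  | ofNat n => rw [Int.ofNat_eq_coe, zpow_natCast, Matrix.det_pow, smat_det, one_pow]
  | negSucc n =>
      rw [zpow_negSucc, Matrix.det_nonsing_inv, Matrix.det_pow, smat_det, one_pow]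
      simp [Ring.inverse_one]

lemma smat_commute_fmat : Commute Smat Fmat := by
  show Smat * Fmat = Fmat * Smat
  simp [Smat, Fmat]

theorem stmt_6 :
    (∀ k : ℤ,
      DehnTwistMatrixVec ((Smat ^ k) *ᵥ ![1, 0]) *
        DehnTwistMatrixVec ((Smat ^ k) *ᵥ ![3, 5]) = Fmat) ∧
    DehnTwistMatrix 1 0 * DehnTwistMatrix 3 5 = Fmat ∧
    !![1, 1; 0, 1] * !![-14, 9; -25, 16] = !![(-39 : ℤ), 25; -25, 16] := by
  refine ⟨?_, ?_, ?_⟩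
  · intro k
    set A := Smat ^ k with hAdef
    have hdet : A.det = 1 := smat_zpow_det k
    have hunit : IsUnit A := (Matrix.isUnit_iff_isUnit_det A).2 (by rw [hdet]; exact isUnit_one)
    have hbase : DehnTwistMatrixVec ![1, 0] * DehnTwistMatrixVec ![3, 5] = Fmat := by
      simp only [DehnTwistMatrixVec, DehnTwistMatrix, Fmat]
      norm_num
    have hcomm : A * Fmat = Fmat * A :=
      (Matrix.Commute.zpow_left smat_commute_fmat k)
    apply hunit.mul_right_cancel
    calc DehnTwistMatrixVec (A *ᵥ ![1, 0]) * DehnTwistMatrixVec (A *ᵥ ![3, 5]) * A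
        = DehnTwistMatrixVec (A *ᵥ ![1, 0]) * (DehnTwistMatrixVec (A *ᵥ ![3, 5]) * A) := by
          rw [Matrix.mul_assoc]
      _ = DehnTwistMatrixVec (A *ᵥ ![1, 0]) * (A * DehnTwistMatrixVec ![3, 5]) := by
          rw [dtm_conj A hdet]
      _ = (DehnTwistMatrixVec (A *ᵥ ![1, 0]) * A) * DehnTwistMatrixVec ![3, 5] := by
          rw [Matrix.mul_assoc]
      _ = (A * DehnTwistMatrixVec ![1, 0]) * DehnTwistMatrixVec ![3, 5] := by
          rw [dtm_conj A hdet]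
      _ = A * (DehnTwistMatrixVec ![1, 0] * DehnTwistMatrixVec ![3, 5]) := by
          rw [Matrix.mul_assoc]
      _ = A * Fmat := by rw [hbase]
      _ = Fmat * A := hcomm
  · simp only [DehnTwistMatrix, Fmat]
    norm_num
  · decide
end

section
/- Let A = [[−14, 9], [−25, 16]], B = [[1, 1], [0, 1]], A' = [[−39, 25], [−64, 41]], B' = [[1, 0], [−1, 1]]. There is no 2×2 integer matrix K with det K = 1 such that K⁻¹·A·K = A' and K⁻¹·B·K = B'. -/
open Matrix

theorem stmt_7 :
    let A : Matrix (Fin 2) (Fin 2) ℤ := !![-14, 9; -25, 16]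
    let B : Matrix (Fin 2) (Fin 2) ℤ := !![1, 1; 0, 1]
    let A' : Matrix (Fin 2) (Fin 2) ℤ := !![-39, 25; -64, 41]
    let B' : Matrix (Fin 2) (Fin 2) ℤ := !![1, 0; -1, 1]
    ¬ ∃ K : Matrix (Fin 2) (Fin 2) ℤ,
        K.det = 1 ∧ K⁻¹ * A * K = A' ∧ K⁻¹ * B * K = B' := by
  intro A B A' B'
  rintro ⟨K, hdet, hA, hB⟩
  have hu : IsUnit K.det := by rw [hdet]; exact isUnit_one
  have hAK : A * K = K * A' := by
    calc A * K = K * (K⁻¹ * A * K) := by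
          rw [← Matrix.mul_assoc, ← Matrix.mul_assoc, Matrix.mul_nonsing_inv K hu,
            Matrix.one_mul]
      _ = K * A' := by rw [hA]
  have hBK : B * K = K * B' := by
    calc B * K = K * (K⁻¹ * B * K) := by
          rw [← Matrix.mul_assoc, ← Matrix.mul_assoc, Matrix.mul_nonsing_inv K hu,
            Matrix.one_mul]
      _ = K * B' := by rw [hB]
  have e1 := congrFun (congrFun hBK 0) 0
  have e2 := congrFun (congrFun hBK 0) 1
  have e3 := congrFun (congrFun hAK 1) 0
  simp [A, B, A', B', Matrix.mul_apply, Fin.sum_univ_two] at e1 e2 e3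
  have hd : K.det = K 0 0 * K 1 1 - K 0 1 * K 1 0 := by rw [Matrix.det_fin_two]
  rw [hd] at hdet
  rw [e1, e2] at hdet e3
  have hb1 : K 0 1 = 1 ∨ K 0 1 = -1 := by
    have : K 0 1 * K 0 1 = 1 := by nlinarith
    exact mul_self_eq_one_iff.mp this
  rcases hb1 with h | h <;> rw [h] at e3 <;> omega
end

section
/- Let A = [[−14, 9], [−25, 16]], B = [[1, 1], [0, 1]], A' = [[−39, 25], [−64, 41]], B' = [[1, 0], [−1, 1]]. There is no 2×2 integer matrix K with det K = 1 such that K⁻¹·(A⁻¹·B·A)·K = A' and K⁻¹·A·K = B'. -/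
open Matrix

theorem stmt_8 :
    let A : Matrix (Fin 2) (Fin 2) ℤ := !![-14, 9; -25, 16]
    let B : Matrix (Fin 2) (Fin 2) ℤ := !![1, 1; 0, 1]
    let A' : Matrix (Fin 2) (Fin 2) ℤ := !![-39, 25; -64, 41]
    let B' : Matrix (Fin 2) (Fin 2) ℤ := !![1, 0; -1, 1]
    ¬ ∃ K : Matrix (Fin 2) (Fin 2) ℤ,
        K.det = 1 ∧ K⁻¹ * (A⁻¹ * B * A) * K = A' ∧ K⁻¹ * A * K = B' := by
  intro A B A' B'
  rintro ⟨K, hdet, h2, h3⟩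
  have hAinv : A⁻¹ = !![16, -9; 25, -14] := by
    apply Matrix.inv_eq_right_inv
    show A * _ = _
    simp only [A]
    norm_num [Matrix.mul_fin_two]
    exact Matrix.one_fin_two.symm
  rw [hAinv] at h2
  have hC : (!![16, -9; 25, -14] : Matrix (Fin 2) (Fin 2) ℤ) * B * A
      = !![-399, 256; -625, 401] := by
    simp only [A, B]
    norm_num [Matrix.mul_fin_two]
  rw [hC] at h2
  have hKU : IsUnit K.det := by rw [hdet]; exact isUnit_one
  have hKK : K * K⁻¹ = 1 := Matrix.mul_nonsing_inv K hKU
  have h2' : !![-399, 256; -625, 401] * K = K * A' := by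
    calc !![-399, 256; -625, 401] * K
        = K * K⁻¹ * !![-399, 256; -625, 401] * K := by rw [hKK, Matrix.one_mul]
      _ = K * (K⁻¹ * !![-399, 256; -625, 401] * K) := by
          rw [Matrix.mul_assoc, Matrix.mul_assoc, Matrix.mul_assoc]
      _ = K * A' := by rw [h2]
  have h3' : A * K = K * B' := by
    calc A * K = K * K⁻¹ * A * K := by rw [hKK, Matrix.one_mul]
      _ = K * (K⁻¹ * A * K) := by rw [Matrix.mul_assoc, Matrix.mul_assoc, Matrix.mul_assoc]
      _ = K * B' := by rw [h3]
  set a := K 0 0 with ha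
  set b := K 0 1 with hb
  set c := K 1 0 with hc
  set d := K 1 1 with hd
  have hK : K = !![a, b; c, d] := Matrix.eta_fin_two K
  rw [hK] at h2' h3'
  rw [hK, Matrix.det_fin_two_of] at hdet
  simp only [A, A', B'] at h2' h3'
  rw [Matrix.mul_fin_two, Matrix.mul_fin_two] at h2' h3'
  have e1 := congrFun (congrFun h3' 0) 0
  have e3 := congrFun (congrFun h3' 1) 0
  have f1 := congrFun (congrFun h2' 0) 0
  simp only [Matrix.cons_val_zero, Matrix.cons_val_one, Matrix.head_cons, Matrix.of_apply,
    Matrix.cons_val'] at e1 e3 f1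
  -- e1 : -14*a + 9*c = a*1 + b*(-1), e3 : -25*a+16*c = c*1 + d*(-1)
  -- f1 : -399*a + 256*c = a*(-39) + b*(-64)
  have hb' : b = 15*a - 9*c := by linarith
  have hd' : d = 25*a - 15*c := by linarith
  have h15 : 15*a = 8*c := by rw [hb'] at f1; linarith
  have hsq : (5*a)*(5*a) = 64 := by
    rw [hb', hd'] at hdet
    linear_combination 64*hdet + (-105*a+72*c)*h15
  have : (5*a - 8) * (5*a + 8) = 0 := by ring_nf; linarith
  rcases mul_eq_zero.mp this with h | h <;> omega
end

section
/- Let C be a 2×2 integer matrix with C² = I and det C = −1. If v, w ∈ ℤ² are primitive vectors such that C·v = v and C·w = −w, then the absolute value of the determinant |v₀·w₁ − v₁·w₀| is at most 2. -/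
open Matrix

theorem stmt_9 (C : Matrix (Fin 2) (Fin 2) ℤ) (hC2 : C ^ 2 = 1) (hCdet : C.det = -1)
    (v w : Fin 2 → ℤ) (hv : IsCoprime (v 0) (v 1)) (hw : IsCoprime (w 0) (w 1))
    (hCv : C *ᵥ v = v) (hCw : C *ᵥ w = -w) :
    |v 0 * w 1 - v 1 * w 0| ≤ 2 := by
  set D := v 0 * w 1 - v 1 * w 0 with hD
  have e1 := congr_fun hCv 0
  have e2 := congr_fun hCv 1
  have e3 := congr_fun hCw 0
  have e4 := congr_fun hCw 1
  simp only [Matrix.mulVec, dotProduct, Fin.sum_univ_two, Pi.neg_apply] at e1 e2 e3 e4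
  have h00 : D ∣ 2 * (v 0 * w 0) := ⟨-(C 0 1), by linear_combination (v 0) * e3 - (w 0) * e1⟩
  have h01 : D ∣ 2 * (v 0 * w 1) := ⟨C 0 0 + 1, by linear_combination (v 1) * e3 - (w 1) * e1⟩
  have h10 : D ∣ 2 * (v 1 * w 0) := ⟨C 0 0 - 1, by linear_combination (v 1) * e3 - (w 1) * e1⟩
  have h11 : D ∣ 2 * (v 1 * w 1) := ⟨C 1 0, by linear_combination (v 1) * e4 - (w 1) * e2⟩
  obtain ⟨x, y, hxy⟩ := hv
  obtain ⟨s, t, hst⟩ := hw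
  have hDdvd : D ∣ 2 := by
    have : (2 : ℤ) = (x * s) * (2 * (v 0 * w 0)) + (x * t) * (2 * (v 0 * w 1))
        + (y * s) * (2 * (v 1 * w 0)) + (y * t) * (2 * (v 1 * w 1)) := by
      linear_combination (-2 * (s * w 0 + t * w 1)) * hxy - 2 * hst
    rw [this]
    exact dvd_add (dvd_add (dvd_add (Dvd.dvd.mul_left h00 _) (Dvd.dvd.mul_left h01 _))
      (Dvd.dvd.mul_left h10 _)) (Dvd.dvd.mul_left h11 _)
  rcases eq_or_ne D 0 with h | h
  · simp [h]
  · exact Int.le_of_dvd (by norm_num) ((abs_dvd _ _).mpr hDdvd)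
end

section
/- Let α, β, γ, δ be integers such that M(γ,δ) · M(α,β) = F. Then both (α,β) and (γ,δ) satisfy the Diophantine equation 25x² + 25y² − 55xy = 25; that is, 25α² + 25β² − 55αβ = 25 and 25γ² + 25δ² − 55γδ = 25. -/
open Matrix

theorem stmt_13 (α β γ δ : ℤ)
    (h : DehnTwistMatrix γ δ * DehnTwistMatrix α β = Fmat) :
    25 * α ^ 2 + 25 * β ^ 2 - 55 * α * β = 25 ∧
    25 * γ ^ 2 + 25 * δ ^ 2 - 55 * γ * δ = 25 := by
  have h00 := congrFun (congrFun h 0) 0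
  have h01 := congrFun (congrFun h 0) 1
  have h10 := congrFun (congrFun h 1) 0
  have h11 := congrFun (congrFun h 1) 1
  simp [DehnTwistMatrix, Fmat, Matrix.mul_apply, Fin.sum_univ_two] at h00 h01 h10 h11
  constructor
  · linear_combination (-1 - α*β) * h00 - β^2 * h01 + α^2 * h10 + (α*β - 1) * h11
  · linear_combination (-1 - γ*δ) * h00 - δ^2 * h01 + γ^2 * h10 + (γ*δ - 1) * h11
end

section
/- The ordered pair of matrices (M(3,5), M(1,0)) = ([[−14,9],[−25,16]], [[1,1],[0,1]]) is not Hurwitz equivalent to the ordered pair (M(5,8), M(0,1)) = ([[−39,25],[−64,41]], [[1,0],[−1,1]]). -/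
open Matrix

/-- Elementary Hurwitz moves and global conjugation on ordered pairs of
2×2 integer matrices of determinant 1. -/
inductive HurwitzMove :
    (Matrix (Fin 2) (Fin 2) ℤ × Matrix (Fin 2) (Fin 2) ℤ) →
    (Matrix (Fin 2) (Fin 2) ℤ × Matrix (Fin 2) (Fin 2) ℤ) → Prop
  | move1 (A B : Matrix (Fin 2) (Fin 2) ℤ) :
      HurwitzMove (A, B) (A⁻¹ * B * A, A)
  | move2 (A B : Matrix (Fin 2) (Fin 2) ℤ) :
      HurwitzMove (A, B) (B, B * A * B⁻¹)
  | conj (A B K : Matrix (Fin 2) (Fin 2) ℤ) (hK : K.det = 1) :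
      HurwitzMove (A, B) (K⁻¹ * A * K, K⁻¹ * B * K)

/-- Hurwitz equivalence: the equivalence relation generated by the elementary
Hurwitz moves together with global conjugation. -/
def HurwitzEquiv :
    (Matrix (Fin 2) (Fin 2) ℤ × Matrix (Fin 2) (Fin 2) ℤ) →
    (Matrix (Fin 2) (Fin 2) ℤ × Matrix (Fin 2) (Fin 2) ℤ) → Prop :=
  Relation.EqvGen HurwitzMove

namespace Hw14

abbrev Mat := Matrix (Fin 2) (Fin 2) ℤ

def mA : Mat := !![-14, 9; -25, 16]
def mB : Mat := !![1, 1; 0, 1]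
def mC : Mat := !![-399, 256; -625, 401]
def mF : Mat := !![-39, 25; -25, 16]
def iA : Mat := !![16, -9; 25, -14]
def iB : Mat := !![1, -1; 0, 1]
def iC : Mat := !![401, -256; 625, -399]
def iF : Mat := !![16, -25; 25, -39]

lemma det_mA : mA.det = 1 := by decide
lemma det_mB : mB.det = 1 := by decide
lemma det_mC : mC.det = 1 := by decide
lemma det_mF : mF.det = 1 := by decide
lemma det_iF : iF.det = 1 := by decide

lemma iA_mA : iA * mA = 1 := by decide
lemma iB_mB : iB * mB = 1 := by decide
lemma iC_mC : iC * mC = 1 := by decide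

lemma id1 : iA * mB * mA = mC := by decide
lemma id2 : mF * mC = mB * mF := by decide
lemma id2' : iF * mB = mC * iF := by decide
lemma id3 : mA * mC * iA = mB := by decide
lemma id5 : iF * (mB * mA) * iB = mA * iF := by decide
lemma id6 : mF * (iC * mA) * mC = mA * mF := by decide

/-- The invariant: the pair is simultaneously conjugate (over determinant-one
integer matrices) to `(mA, mB)` or to `(mC, mA)` (which is σ of the former). -/
def Inv (P : Mat × Mat) : Prop :=
  ∃ K : Mat, K.det = 1 ∧
    ((K * P.1 = mA * K ∧ K * P.2 = mB * K) ∨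
     (K * P.1 = mC * K ∧ K * P.2 = mA * K))

lemma det_of_rel {K X M : Mat} (hK : K.det = 1) (hM : M.det = 1)
    (h : K * X = M * K) : X.det = 1 := by
  have h2 := congrArg Matrix.det h
  rw [Matrix.det_mul, Matrix.det_mul, hK, hM] at h2
  linarith

lemma shuffle {K X Y M N : Mat} (hX : K * X = M * K) (hY : K * Y = N * K) :
    K * (X * Y) = M * N * K := by
  rw [← mul_assoc, hX, mul_assoc, hY, ← mul_assoc]

lemma push_inv {K X M N : Mat} (hK : K.det = 1) (hM : M.det = 1)
    (hNM : N * M = 1) (h : K * X = M * K) : K * X⁻¹ = N * K := by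
  have hX : X.det = 1 := det_of_rel hK hM h
  have hXu : IsUnit X.det := by rw [hX]; exact isUnit_one
  have h2 : N * (K * X) = K := by rw [h, ← mul_assoc, hNM, one_mul]
  calc K * X⁻¹ = N * (K * X) * X⁻¹ := by rw [h2]
    _ = N * K * (X * X⁻¹) := by rw [mul_assoc, mul_assoc, mul_assoc]
    _ = N * K := by rw [Matrix.mul_nonsing_inv _ hXu, mul_one]

lemma inv_move1 {A B : Mat} (h : Inv (A, B)) : Inv (A⁻¹ * B * A, A) := by
  obtain ⟨K, hK, hcase⟩ := h
  rcases hcase with ⟨hA, hB⟩ | ⟨hA, hB⟩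
  · refine ⟨K, hK, Or.inr ⟨?_, hA⟩⟩
    have hA' : K * A⁻¹ = iA * K := push_inv hK det_mA iA_mA hA
    show K * (A⁻¹ * B * A) = mC * K
    rw [shuffle (shuffle hA' hB) hA, id1]
  · refine ⟨mF * K, by rw [Matrix.det_mul, det_mF, hK, one_mul], Or.inl ⟨?_, ?_⟩⟩
    · have hA' : K * A⁻¹ = iC * K := push_inv hK det_mC iC_mC hA
      show mF * K * (A⁻¹ * B * A) = mA * (mF * K)
      rw [mul_assoc, shuffle (shuffle hA' hB) hA, ← mul_assoc, ← mul_assoc, id6, mul_assoc]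
    · show mF * K * A = mB * (mF * K)
      rw [mul_assoc, hA, ← mul_assoc, id2, mul_assoc]

lemma inv_move2 {A B : Mat} (h : Inv (A, B)) : Inv (B, B * A * B⁻¹) := by
  obtain ⟨K, hK, hcase⟩ := h
  rcases hcase with ⟨hA, hB⟩ | ⟨hA, hB⟩
  · refine ⟨iF * K, by rw [Matrix.det_mul, det_iF, hK, one_mul], Or.inr ⟨?_, ?_⟩⟩
    · show iF * K * B = mC * (iF * K)
      rw [mul_assoc, hB, ← mul_assoc, id2', mul_assoc]
    · have hB' : K * B⁻¹ = iB * K := push_inv hK det_mB iB_mB hB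
      show iF * K * (B * A * B⁻¹) = mA * (iF * K)
      rw [mul_assoc, shuffle (shuffle hB hA) hB', ← mul_assoc, ← mul_assoc, id5, mul_assoc]
  · refine ⟨K, hK, Or.inl ⟨hB, ?_⟩⟩
    have hB' : K * B⁻¹ = iA * K := push_inv hK det_mA iA_mA hB
    show K * (B * A * B⁻¹) = mB * K
    rw [shuffle (shuffle hB hA) hB', id3]

lemma conj_push {K Kc X M : Mat} (hKc : Kc.det = 1) (hX : K * X = M * K) :
    K * Kc * (Kc⁻¹ * X * Kc) = M * (K * Kc) := by
  have hKcu : IsUnit Kc.det := by rw [hKc]; exact isUnit_one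
  have h1 : Kc * (Kc⁻¹ * X) = X := by
    rw [← mul_assoc, Matrix.mul_nonsing_inv _ hKcu, one_mul]
  calc K * Kc * (Kc⁻¹ * X * Kc) = K * (Kc * (Kc⁻¹ * X)) * Kc := by
        simp only [mul_assoc]
    _ = K * X * Kc := by rw [h1]
    _ = M * (K * Kc) := by rw [hX, mul_assoc]

lemma inv_conj {A B Kc : Mat} (hKc : Kc.det = 1) (h : Inv (A, B)) :
    Inv (Kc⁻¹ * A * Kc, Kc⁻¹ * B * Kc) := by
  obtain ⟨K, hK, hcase⟩ := h
  refine ⟨K * Kc, by rw [Matrix.det_mul, hK, hKc, one_mul], ?_⟩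
  rcases hcase with ⟨hA, hB⟩ | ⟨hA, hB⟩
  · exact Or.inl ⟨conj_push hKc hA, conj_push hKc hB⟩
  · exact Or.inr ⟨conj_push hKc hA, conj_push hKc hB⟩

lemma det_first {A B : Mat} (h : Inv (A, B)) : A.det = 1 := by
  obtain ⟨K, hK, hcase⟩ := h
  rcases hcase with ⟨hA, _⟩ | ⟨hA, _⟩
  · exact det_of_rel hK det_mA hA
  · exact det_of_rel hK det_mC hA

lemma det_second {A B : Mat} (h : Inv (A, B)) : B.det = 1 := by
  obtain ⟨K, hK, hcase⟩ := h
  rcases hcase with ⟨_, hB⟩ | ⟨_, hB⟩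
  · exact det_of_rel hK det_mB hB
  · exact det_of_rel hK det_mA hB

lemma inv_back1 {A B : Mat} (h : Inv (A⁻¹ * B * A, A)) : Inv (A, B) := by
  have hAd : A.det = 1 := det_second h
  have hAu : IsUnit A.det := by rw [hAd]; exact isUnit_one
  have h2 := inv_move2 h
  have h3 : A * (A⁻¹ * B * A) * A⁻¹ = B := by
    rw [← mul_assoc, ← mul_assoc, Matrix.mul_nonsing_inv _ hAu, one_mul,
      mul_assoc, Matrix.mul_nonsing_inv _ hAu, mul_one]
  rwa [h3] at h2

lemma inv_back2 {A B : Mat} (h : Inv (B, B * A * B⁻¹)) : Inv (A, B) := by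
  have hBd : B.det = 1 := det_first h
  have hBu : IsUnit B.det := by rw [hBd]; exact isUnit_one
  have h2 := inv_move1 h
  have h3 : B⁻¹ * (B * A * B⁻¹) * B = A := by
    rw [← mul_assoc, ← mul_assoc, Matrix.nonsing_inv_mul _ hBu, one_mul,
      mul_assoc, Matrix.nonsing_inv_mul _ hBu, mul_one]
  rwa [h3] at h2

lemma inv_backconj {A B Kc : Mat} (hKc : Kc.det = 1)
    (h : Inv (Kc⁻¹ * A * Kc, Kc⁻¹ * B * Kc)) : Inv (A, B) := by
  have hKcu : IsUnit Kc.det := by rw [hKc]; exact isUnit_one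
  have hKci : Kc⁻¹.det = 1 := by
    rw [Matrix.det_nonsing_inv, hKc]; simp
  have h2 := inv_conj hKci h
  have h3 : ∀ X : Mat, (Kc⁻¹)⁻¹ * (Kc⁻¹ * X * Kc) * Kc⁻¹ = X := by
    intro X
    rw [Matrix.nonsing_inv_nonsing_inv _ hKcu, ← mul_assoc, ← mul_assoc,
      Matrix.mul_nonsing_inv _ hKcu, one_mul, mul_assoc,
      Matrix.mul_nonsing_inv _ hKcu, mul_one]
  rwa [h3 A, h3 B] at h2

lemma move_iff {P Q : Mat × Mat} (h : HurwitzMove P Q) : Inv P ↔ Inv Q := by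
  cases h with
  | move1 A B => exact ⟨inv_move1, inv_back1⟩
  | move2 A B => exact ⟨inv_move2, inv_back2⟩
  | conj A B K hK => exact ⟨inv_conj hK, inv_backconj hK⟩

lemma equiv_iff {P Q : Mat × Mat} (h : HurwitzEquiv P Q) : Inv P ↔ Inv Q := by
  induction h with
  | rel _ _ h => exact move_iff h
  | refl _ => exact Iff.rfl
  | symm _ _ _ ih => exact ih.symm
  | trans _ _ _ _ _ ih1 ih2 => exact ih1.trans ih2

end Hw14

open Hw14

theorem stmt_14 :
    ¬ HurwitzEquiv (!![-14, 9; -25, 16], !![1, 1; 0, 1])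
        (!![-39, 25; -64, 41], !![1, 0; -1, 1]) := by
  intro h
  have h1 : Inv (!![-14, 9; -25, 16], !![1, 1; 0, 1]) := by
    refine ⟨1, Matrix.det_one, Or.inl ⟨?_, ?_⟩⟩ <;> rw [one_mul, mul_one] <;> rfl
  have h2 : Inv (!![-39, 25; -64, 41], !![1, 0; -1, 1]) := (equiv_iff h).mp h1
  obtain ⟨K, hdet, hcase⟩ := h2
  rcases hcase with ⟨hA, hB⟩ | ⟨hA, hB⟩
  · -- case 1
    rw [show mA = !![-14,9;-25,16] from rfl] at hA
    rw [show mB = !![1,1;0,1] from rfl] at hB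
    rw [Matrix.eta_fin_two K] at hA hB hdet
    rw [Matrix.mul_fin_two, Matrix.mul_fin_two] at hA hB
    rw [Matrix.det_fin_two_of] at hdet
    rw [← Matrix.ext_iff] at hA hB
    simp only [Fin.forall_fin_two] at hA hB
    simp only [Matrix.cons_val', Matrix.cons_val_zero, Matrix.cons_val_one, Matrix.head_cons,
      Matrix.empty_val', Matrix.cons_val_fin_one, Matrix.head_fin_const, Matrix.of_apply] at hA hB
    obtain ⟨⟨e1, e2⟩, e3, e4⟩ := hA
    obtain ⟨⟨f1, f2⟩, f3, f4⟩ := hB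
    set a := K 0 0; set b := K 0 1; set c := K 1 0; set d := K 1 1
    have hbb : b * b = 1 := by linear_combination hdet + (-b) * f1 + a * f2
    rcases Int.isUnit_iff.mp (IsUnit.of_mul_eq_one (a := b) b hbb) with h | h <;> omega
  · -- case 2
    rw [show mC = !![-399,256;-625,401] from rfl] at hA
    rw [show mA = !![-14,9;-25,16] from rfl] at hB
    rw [Matrix.eta_fin_two K] at hA hB hdet
    rw [Matrix.mul_fin_two, Matrix.mul_fin_two] at hA hB
    rw [Matrix.det_fin_two_of] at hdet
    rw [← Matrix.ext_iff] at hA hB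
    simp only [Fin.forall_fin_two] at hA hB
    simp only [Matrix.cons_val', Matrix.cons_val_zero, Matrix.cons_val_one, Matrix.head_cons,
      Matrix.empty_val', Matrix.cons_val_fin_one, Matrix.head_fin_const, Matrix.of_apply] at hA hB
    obtain ⟨⟨e1, e2⟩, e3, e4⟩ := hA
    obtain ⟨⟨f1, f2⟩, f3, f4⟩ := hB
    set a := K 0 0; set b := K 0 1; set c := K 1 0; set d := K 1 1
    have h5b : 5 * b = 3 * d := by omega
    have h5c : 5 * c = -3 * d := by omega
    have h25a : 25 * a = -8 * d := by omega
    have hdd : d * d = 25 := by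
      linear_combination 25 * hdet + (-d) * h25a + (5*c) * h5b + (3*d) * h5c
    have hfac : (d - 5) * (d + 5) = 0 := by linear_combination hdd
    rcases mul_eq_zero.mp hfac with h | h <;> omega
end

section
/- Every ordered pair of Dehn twist matrices whose product is F is Hurwitz equivalent to one of exactly two classes: for all integers α, β, γ, δ with M(γ,δ) · M(α,β) = F, the ordered pair (M(α,β), M(γ,δ)) is Hurwitz equivalent either to (M(3,5), M(1,0)) or to (M(5,8), M(0,1)). -/
set_option maxHeartbeats 1000000

open Matrix

/-! ### Auxiliary lemmas -/

lemma fin2_ext' {x y z w x' y' z' w' : ℤ} (h1 : x = x') (h2 : y = y') (h3 : z = z')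
    (h4 : w = w') : !![x,y;z,w] = !![x',y';z',w'] := by rw [h1,h2,h3,h4]

lemma dtm_congr {a b a' b' : ℤ} (h1 : a*b = a'*b') (h2 : a^2 = a'^2) (h3 : b^2 = b'^2) :
    DehnTwistMatrix a b = DehnTwistMatrix a' b' := by
  unfold DehnTwistMatrix; rw [h1,h2,h3]

lemma dtm_inv (a b : ℤ) : (DehnTwistMatrix a b)⁻¹ = !![1+a*b, -a^2; b^2, 1-a*b] := by
  apply Matrix.inv_eq_right_inv
  unfold DehnTwistMatrix
  rw [Matrix.mul_fin_two, Matrix.one_fin_two]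
  exact fin2_ext' (by ring) (by ring) (by ring) (by ring)

lemma dtm_conj1 (a b g d : ℤ) :
    (DehnTwistMatrix a b)⁻¹ * DehnTwistMatrix g d * DehnTwistMatrix a b
      = DehnTwistMatrix (g-(a*d-b*g)*a) (d-(a*d-b*g)*b) := by
  rw [dtm_inv]; unfold DehnTwistMatrix
  rw [Matrix.mul_fin_two, Matrix.mul_fin_two]
  exact fin2_ext' (by ring) (by ring) (by ring) (by ring)

lemma dtm_conj2 (a b g d : ℤ) :
    DehnTwistMatrix g d * DehnTwistMatrix a b * (DehnTwistMatrix g d)⁻¹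
      = DehnTwistMatrix (a-(a*d-b*g)*g) (b-(a*d-b*g)*d) := by
  rw [dtm_inv]; unfold DehnTwistMatrix
  rw [Matrix.mul_fin_two, Matrix.mul_fin_two]
  exact fin2_ext' (by ring) (by ring) (by ring) (by ring)

lemma dtm_mul_inv (a b : ℤ) : DehnTwistMatrix a b * (DehnTwistMatrix a b)⁻¹ = 1 := by
  rw [dtm_inv]; unfold DehnTwistMatrix
  rw [Matrix.mul_fin_two, Matrix.one_fin_two]
  exact fin2_ext' (by ring) (by ring) (by ring) (by ring)

lemma dtm_inv_mul (a b : ℤ) : (DehnTwistMatrix a b)⁻¹ * DehnTwistMatrix a b = 1 := by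
  rw [dtm_inv]; unfold DehnTwistMatrix
  rw [Matrix.mul_fin_two, Matrix.one_fin_two]
  exact fin2_ext' (by ring) (by ring) (by ring) (by ring)

lemma hm1 (a b g d : ℤ) :
    HurwitzMove (DehnTwistMatrix a b, DehnTwistMatrix g d)
      (DehnTwistMatrix (g-(a*d-b*g)*a) (d-(a*d-b*g)*b), DehnTwistMatrix a b) := by
  have h := HurwitzMove.move1 (DehnTwistMatrix a b) (DehnTwistMatrix g d)
  rwa [dtm_conj1] at h

lemma hm2 (a b g d : ℤ) :
    HurwitzMove (DehnTwistMatrix a b, DehnTwistMatrix g d)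
      (DehnTwistMatrix g d, DehnTwistMatrix (a-(a*d-b*g)*g) (b-(a*d-b*g)*d)) := by
  have h := HurwitzMove.move2 (DehnTwistMatrix a b) (DehnTwistMatrix g d)
  rwa [dtm_conj2] at h

lemma sol1 {a b g d : ℤ} (h : DehnTwistMatrix g d * DehnTwistMatrix a b = Fmat) :
    DehnTwistMatrix a b * DehnTwistMatrix (g-(a*d-b*g)*a) (d-(a*d-b*g)*b) = Fmat := by
  rw [← dtm_conj1, ← Matrix.mul_assoc, ← Matrix.mul_assoc, dtm_mul_inv, Matrix.one_mul]
  exact h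

lemma sol2 {a b g d : ℤ} (h : DehnTwistMatrix g d * DehnTwistMatrix a b = Fmat) :
    DehnTwistMatrix (a-(a*d-b*g)*g) (b-(a*d-b*g)*d) * DehnTwistMatrix g d = Fmat := by
  rw [← dtm_conj2, Matrix.mul_assoc, dtm_inv_mul, Matrix.mul_one]
  exact h

lemma entries {a b g d : ℤ} (h : DehnTwistMatrix g d * DehnTwistMatrix a b = Fmat) :
    (1-g*d)*(1-a*b) + g^2*(-b^2) = -39 ∧ (1-g*d)*a^2 + g^2*(1+a*b) = 25 ∧
    (-d^2)*(1-a*b) + (1+g*d)*(-b^2) = -25 ∧ (-d^2)*a^2 + (1+g*d)*(1+a*b) = 16 := by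
  unfold DehnTwistMatrix Fmat at h
  rw [Matrix.mul_fin_two] at h
  have h00 := congrFun (congrFun h 0) 0
  have h01 := congrFun (congrFun h 0) 1
  have h10 := congrFun (congrFun h 1) 0
  have h11 := congrFun (congrFun h 1) 1
  simp at h00 h01 h10 h11
  exact ⟨by linarith, by linarith, by linarith, by linarith⟩

/-- the base pair of the second chain -/
lemma chainB : HurwitzEquiv (DehnTwistMatrix 0 1, DehnTwistMatrix 5 3)
    (DehnTwistMatrix 5 8, DehnTwistMatrix 0 1) := by
  have mv := hm2 5 8 0 1
  norm_num at mv
  exact Relation.EqvGen.symm _ _ (Relation.EqvGen.rel _ _ mv)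

lemma main_lemma : ∀ N : ℕ, ∀ a b g d : ℤ, a^2+b^2+g^2+d^2 ≤ (N:ℤ) →
    DehnTwistMatrix g d * DehnTwistMatrix a b = Fmat →
    HurwitzEquiv (DehnTwistMatrix a b, DehnTwistMatrix g d)
        (DehnTwistMatrix 3 5, DehnTwistMatrix 1 0) ∨
    HurwitzEquiv (DehnTwistMatrix a b, DehnTwistMatrix g d)
        (DehnTwistMatrix 5 8, DehnTwistMatrix 0 1) := by
  intro N
  induction N with
  | zero =>
    intro a b g d hN h
    exfalso
    obtain ⟨e1, e2, e3, e4⟩ := entries h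
    have r0 : 1-g*d = -39*(1+a*b)+25*b^2 := by linear_combination (1+a*b)*e1 + b^2*e2
    have r3 : g*d = 15+25*a^2-16*(a*b) := by linear_combination (-(a^2))*e3 + (1-a*b)*e4
    have conic25 : 25*a^2 - 55*(a*b) + 25*b^2 = 25 := by linear_combination -r0 - r3
    push_cast at hN
    nlinarith [sq_nonneg a, sq_nonneg b, sq_nonneg g, sq_nonneg d, sq_nonneg (a+b),
      sq_nonneg (a-b), conic25, hN]
  | succ n ih =>
    intro a b g d hN h
    obtain ⟨e1, e2, e3, e4⟩ := entries h
    have hc2 : (a*d-b*g)^2 = 25 := by linear_combination -e1 - e4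
    by_cases H1 : 25*(a^2+b^2) < 2*(a*d-b*g)*(a*g+b*d)
    · -- move 1 decreases the measure
      have h' := sol1 h
      have hm : (g-(a*d-b*g)*a)^2+(d-(a*d-b*g)*b)^2+a^2+b^2 ≤ (n:ℤ) := by
        have hexp : (g-(a*d-b*g)*a)^2+(d-(a*d-b*g)*b)^2+a^2+b^2
            = (a^2+b^2+g^2+d^2) + 25*(a^2+b^2) - 2*(a*d-b*g)*(a*g+b*d) := by
          linear_combination (a^2+b^2)*hc2
        push_cast at hN
        omega
      rcases ih _ _ _ _ hm h' with hh | hh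
      · exact Or.inl (Relation.EqvGen.trans _ _ _ (Relation.EqvGen.rel _ _ (hm1 a b g d)) hh)
      · exact Or.inr (Relation.EqvGen.trans _ _ _ (Relation.EqvGen.rel _ _ (hm1 a b g d)) hh)
    by_cases H2 : 25*(g^2+d^2) < 2*(a*d-b*g)*(a*g+b*d)
    · -- move 2 decreases the measure
      have h' := sol2 h
      have hm : g^2+d^2+(a-(a*d-b*g)*g)^2+(b-(a*d-b*g)*d)^2 ≤ (n:ℤ) := by
        have hexp : g^2+d^2+(a-(a*d-b*g)*g)^2+(b-(a*d-b*g)*d)^2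
            = (a^2+b^2+g^2+d^2) + 25*(g^2+d^2) - 2*(a*d-b*g)*(a*g+b*d) := by
          linear_combination (g^2+d^2)*hc2
        push_cast at hN
        omega
      rcases ih _ _ _ _ hm h' with hh | hh
      · exact Or.inl (Relation.EqvGen.trans _ _ _ (Relation.EqvGen.rel _ _ (hm2 a b g d)) hh)
      · exact Or.inr (Relation.EqvGen.trans _ _ _ (Relation.EqvGen.rel _ _ (hm2 a b g d)) hh)
    -- minimal case
    push_neg at H1 H2
    have r0 : 1-g*d = -39*(1+a*b)+25*b^2 := by linear_combination (1+a*b)*e1 + b^2*e2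
    have r1 : g^2 = 39*a^2 - 25*(a*b) + 25 := by linear_combination (-(a^2))*e1 + (1-a*b)*e2
    have r2 : d^2 = 25 + 25*(a*b) - 16*b^2 := by linear_combination (-(1+a*b))*e3 - b^2*e4
    have r3 : g*d = 15+25*a^2-16*(a*b) := by linear_combination (-(a^2))*e3 + (1-a*b)*e4
    have conic25 : 25*a^2 - 55*(a*b) + 25*b^2 = 25 := by linear_combination -r0 - r3
    have hq : g^2 + d^2 = 39*a^2 - 16*b^2 + 50 := by linear_combination r1 + r2
    have hcp2 : 2*(a*d-b*g)*(a*g+b*d) = 55*(a^2-b^2) + 275*(a-b)^2 - 250 := by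
      linear_combination 2*(a^2-b^2)*r3 + 2*(a*b)*r2 - 2*(a*b)*r1 + (2*a^2-10)*conic25
    have h25ab : 25*(a^2+b^2) = 275*(a-b)^2 - 250 := by linear_combination (-10)*conic25
    have k1 : a^2 ≤ b^2 := by linarith [H1, hcp2, h25ab]
    have k2 : 50 ≤ 105*(a-b)^2 + 23*(a^2-b^2) := by
      nlinarith [H2, hq, hcp2, conic25, sq_nonneg a]
    have k2' : 23*(b^2-a^2) ≤ 105*(a-b)^2 - 50 := by linarith
    have h0 : (0:ℤ) ≤ 23*(b^2-a^2) := by linarith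
    have hsq := mul_self_le_mul_self h0 k2'
    have hx2 : 5*(a+b)^2 = 105*(a-b)^2 - 100 := by linear_combination (-4)*conic25
    have hx2y : 5*((a+b)^2*(a-b)^2) = (105*(a-b)^2-100)*(a-b)^2 := by
      linear_combination ((a-b)^2)*hx2
    have k4 : (a-b)^2 ≤ 5 := by
      nlinarith [hsq, hx2y, sq_nonneg (a-b), sq_nonneg (a+b)]
    clear h e1 e2 e3 e4 H1 H2 hq hcp2 r0 hc2 ih h0 hsq hx2 hx2y k2 k2'
    have hab2 : a^2 + b^2 ≤ 45 := by linarith [h25ab, k4]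
    have hbu : b ≤ 6 := by nlinarith [hab2, sq_nonneg (b-7), sq_nonneg a]
    have hbl : -6 ≤ b := by nlinarith [hab2, sq_nonneg (b+7), sq_nonneg a]
    have hau : a ≤ 4 := by nlinarith [k1, hab2, sq_nonneg (a-5)]
    have hal : -4 ≤ a := by nlinarith [k1, hab2, sq_nonneg (a+5)]
    have conicm : 25*(a*a) - 55*(a*b) + 25*(b*b) = 25 := by linear_combination conic25
    have k1m : a*a ≤ b*b := by linear_combination k1
    have hab : (a = 0 ∧ b = 1) ∨ (a = 0 ∧ b = -1) ∨ (a = 3 ∧ b = 5) ∨ (a = -3 ∧ b = -5) := by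
      interval_cases a <;> interval_cases b <;> omega
    rcases hab with ⟨ha, hb⟩ | ⟨ha, hb⟩ | ⟨ha, hb⟩ | ⟨ha, hb⟩ <;> subst ha <;> subst hb
    · -- (a,b) = (0,1) : (g,d) = ±(5,3)
      have hg : (g-5)*(g+5) = 0 := by linear_combination r1
      rcases mul_eq_zero.mp hg with hg | hg
      · have hgv : g = 5 := by omega
        subst hgv
        have hdv : d = 3 := by
          have := r3; omega
        subst hdv
        exact Or.inr chainB
      · have hgv : g = -5 := by omega
        subst hgv
        have hdv : d = -3 := by
          have := r3; omega
        subst hdv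
        rw [show DehnTwistMatrix (-5) (-3) = DehnTwistMatrix 5 3 from
          dtm_congr (by norm_num) (by norm_num) (by norm_num)]
        exact Or.inr chainB
    · -- (a,b) = (0,-1) : (g,d) = ±(5,3)
      rw [show DehnTwistMatrix 0 (-1) = DehnTwistMatrix 0 1 from
        dtm_congr (by norm_num) (by norm_num) (by norm_num)]
      have hg : (g-5)*(g+5) = 0 := by linear_combination r1
      rcases mul_eq_zero.mp hg with hg | hg
      · have hgv : g = 5 := by omega
        subst hgv
        have hdv : d = 3 := by
          have := r3; omega
        subst hdv
        exact Or.inr chainB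
      · have hgv : g = -5 := by omega
        subst hgv
        have hdv : d = -3 := by
          have := r3; omega
        subst hdv
        rw [show DehnTwistMatrix (-5) (-3) = DehnTwistMatrix 5 3 from
          dtm_congr (by norm_num) (by norm_num) (by norm_num)]
        exact Or.inr chainB
    · -- (a,b) = (3,5) : (g,d) = ±(1,0)
      have hg : (g-1)*(g+1) = 0 := by linear_combination r1
      have hdv : d = 0 := by
        have h1 := r3
        rcases mul_eq_zero.mp hg with hg | hg <;> [(have : g = 1 := by omega);
          (have : g = -1 := by omega)] <;> subst this <;> omega
      subst hdv
      rcases mul_eq_zero.mp hg with hg | hg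
      · have hgv : g = 1 := by omega
        subst hgv
        exact Or.inl (Relation.EqvGen.refl _)
      · have hgv : g = -1 := by omega
        subst hgv
        rw [show DehnTwistMatrix (-1) 0 = DehnTwistMatrix 1 0 from
          dtm_congr (by norm_num) (by norm_num) (by norm_num)]
        exact Or.inl (Relation.EqvGen.refl _)
    · -- (a,b) = (-3,-5) : (g,d) = ±(1,0)
      rw [show DehnTwistMatrix (-3) (-5) = DehnTwistMatrix 3 5 from
        dtm_congr (by norm_num) (by norm_num) (by norm_num)]
      have hg : (g-1)*(g+1) = 0 := by linear_combination r1
      have hdv : d = 0 := by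
        have h1 := r3
        rcases mul_eq_zero.mp hg with hg | hg <;> [(have : g = 1 := by omega);
          (have : g = -1 := by omega)] <;> subst this <;> omega
      subst hdv
      rcases mul_eq_zero.mp hg with hg | hg
      · have hgv : g = 1 := by omega
        subst hgv
        exact Or.inl (Relation.EqvGen.refl _)
      · have hgv : g = -1 := by omega
        subst hgv
        rw [show DehnTwistMatrix (-1) 0 = DehnTwistMatrix 1 0 from
          dtm_congr (by norm_num) (by norm_num) (by norm_num)]
        exact Or.inl (Relation.EqvGen.refl _)

theorem stmt_15 (α β γ δ : ℤ)
    (h : DehnTwistMatrix γ δ * DehnTwistMatrix α β = Fmat) :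
    HurwitzEquiv (DehnTwistMatrix α β, DehnTwistMatrix γ δ)
        (DehnTwistMatrix 3 5, DehnTwistMatrix 1 0) ∨
    HurwitzEquiv (DehnTwistMatrix α β, DehnTwistMatrix γ δ)
        (DehnTwistMatrix 5 8, DehnTwistMatrix 0 1) := by
  exact main_lemma (α^2+β^2+γ^2+δ^2).toNat α β γ δ (Int.self_le_toNat _) h
end
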